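/- (Key lower bound) Let 𝒰 be a nonempty set and for each u ∈ 𝒰 let h_u : [0,∞) → [0,1] be Borel measurable, with the shift-consistency property that for each u ∈ 𝒰 and T ≥ 0 there is u' ∈ 𝒰 with h_{u'}(s) = h_u(s+T) for all s ≥ 0 (i.e., the family of cost trajectories is shift-invariant, as for trajectories of a control system). For a probability measure ν on [0,∞), define V_ν = inf_{u∈𝒰} ∫ h_u dν, and for t ≥ 0 let T_t♯ν be the push-forward by s ↦ s+t. Let (θ^k) be a sequence of probability measures on [0,∞) satisfying the long-term condition. Then for every probability measure μ on [0,∞): inf_{t ≥ 0} V_{T_t♯μ} ≤ liminf_{k→∞} V_{θ^k}. -/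

import Mathlib

open MeasureTheory Set Filter

/-- The `s`-total variation of a Borel measure `θ` on `[0,∞)`:
`TV_s(θ) = sup_{Q Borel ⊆ [0,∞)} |θ(Q) - θ(Q+s)|`. -/
noncomputable def TV (θ : Measure ℝ) (s : ℝ) : ℝ :=
  ⨆ Q : {Q : Set ℝ // MeasurableSet Q ∧ Q ⊆ Ici 0},
    |(θ Q.1).toReal - (θ ((fun x => x + s) '' Q.1)).toReal|

/-- The long-term condition for a sequence of measures on `[0,∞)`. -/
def LTC (θ : ℕ → Measure ℝ) : Prop :=
  ∀ S > (0:ℝ), Tendsto (fun k => ⨆ s : Icc (0:ℝ) S, TV (θ k) s) atTop (nhds 0)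

lemma toReal_prob_le_one (θ : Measure ℝ) [IsProbabilityMeasure θ] (A : Set ℝ) :
    (θ A).toReal ≤ 1 := by
  have : θ A ≤ 1 := prob_le_one
  exact le_trans (ENNReal.toReal_mono ENNReal.one_ne_top this) (by simp)

lemma abs_sub_le_TV (θ : Measure ℝ) [IsProbabilityMeasure θ] (s : ℝ)
    {Q : Set ℝ} (hQm : MeasurableSet Q) (hQ0 : Q ⊆ Ici 0) :
    |(θ Q).toReal - (θ ((fun x => x + s) '' Q)).toReal| ≤ TV θ s := by
  have hbdd : BddAbove (range fun Q : {Q : Set ℝ // MeasurableSet Q ∧ Q ⊆ Ici 0} =>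
      |(θ Q.1).toReal - (θ ((fun x => x + s) '' Q.1)).toReal|) := by
    refine ⟨1, ?_⟩
    rintro x ⟨Q, rfl⟩
    have h1 := toReal_prob_le_one θ Q.1
    have h2 := toReal_prob_le_one θ ((fun x => x + s) '' Q.1)
    have h3 : 0 ≤ (θ Q.1).toReal := ENNReal.toReal_nonneg
    have h4 : 0 ≤ (θ ((fun x => x + s) '' Q.1)).toReal := ENNReal.toReal_nonneg
    rw [abs_sub_le_iff]; constructor <;> linarith
  exact le_ciSup hbdd ⟨Q, hQm, hQ0⟩

lemma TV_nonneg (θ : Measure ℝ) [IsProbabilityMeasure θ] (s : ℝ) : 0 ≤ TV θ s := by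
  have := abs_sub_le_TV θ s (Q := ∅) MeasurableSet.empty (empty_subset _)
  simpa using this

lemma TV_le_one (θ : Measure ℝ) [IsProbabilityMeasure θ] (s : ℝ) : TV θ s ≤ 1 := by
  have : Nonempty {Q : Set ℝ // MeasurableSet Q ∧ Q ⊆ Ici 0} :=
    ⟨⟨∅, MeasurableSet.empty, empty_subset _⟩⟩
  refine ciSup_le fun Q => ?_
  have h1 := toReal_prob_le_one θ Q.1
  have h2 := toReal_prob_le_one θ ((fun x => x + s) '' Q.1)
  have h3 : 0 ≤ (θ Q.1).toReal := ENNReal.toReal_nonneg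
  have h4 : 0 ≤ (θ ((fun x => x + s) '' Q.1)).toReal := ENNReal.toReal_nonneg
  rw [abs_sub_le_iff]; constructor <;> linarith

lemma meas_shift_le (θ : Measure ℝ) [IsProbabilityMeasure θ] (hθ : θ (Iio 0) = 0)
    {f : ℝ → ℝ} (hf : Measurable f) {x : ℝ} (lam : ℝ) :
    (θ {a | lam < f (x + a)}).toReal ≤ (θ {a | lam < f a}).toReal + TV θ x := by
  set A := {a : ℝ | lam < f a} with hA
  set B := {a : ℝ | lam < f (x + a)} with hB
  set R := Ici (0:ℝ) ∩ B with hR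
  have hBm : MeasurableSet B := (hf.comp (measurable_const_add x)) measurableSet_Ioi
  have hRm : MeasurableSet R := measurableSet_Ici.inter hBm
  have himg : (fun y => y + x) '' R = A ∩ Ici x := by
    ext b
    constructor
    · rintro ⟨a, ⟨ha0, haB⟩, rfl⟩
      exact ⟨by simpa [hA, hB, add_comm] using haB, by simpa using ha0⟩
    · rintro ⟨hbA, hbx⟩
      refine ⟨b - x, ⟨by simpa using hbx, ?_⟩, by ring⟩
      simpa [hA, hB, add_sub_cancel] using hbA
  have hBR : θ B ≤ θ R := by
    have hsub : B ⊆ R ∪ Iio 0 := by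
      intro a ha
      by_cases h0 : (0:ℝ) ≤ a
      · exact Or.inl ⟨h0, ha⟩
      · exact Or.inr (lt_of_not_ge h0)
    calc θ B ≤ θ (R ∪ Iio 0) := measure_mono hsub
      _ ≤ θ R + θ (Iio 0) := measure_union_le _ _
      _ = θ R := by rw [hθ, add_zero]
  have h1 : (θ B).toReal ≤ (θ R).toReal :=
    ENNReal.toReal_mono (measure_ne_top _ _) hBR
  have h2 : (θ R).toReal - (θ ((fun y => y + x) '' R)).toReal ≤ TV θ x :=
    le_trans (le_abs_self _) (abs_sub_le_TV θ x hRm inter_subset_left)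
  have h3 : (θ ((fun y => y + x) '' R)).toReal ≤ (θ A).toReal := by
    rw [himg]
    exact ENNReal.toReal_mono (measure_ne_top _ _) (measure_mono inter_subset_left)
  linarith

lemma integrable_of_bounded_one {α} [MeasurableSpace α] (ν : Measure α) [IsFiniteMeasure ν]
    {f : α → ℝ} (hm : AEStronglyMeasurable f ν) (hb : ∀ a, ‖f a‖ ≤ 1) : Integrable f ν :=
  (integrable_const 1).mono' hm (ae_of_all _ hb)

lemma integral_shift_le (θ : Measure ℝ) [IsProbabilityMeasure θ] (hθ : θ (Iio 0) = 0)
    {f : ℝ → ℝ} (hf : Measurable f) (hf0 : ∀ t, 0 ≤ f t) (hf1 : ∀ t, f t ≤ 1)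
    {x : ℝ} : ∫ t, f (x + t) ∂θ ≤ ∫ t, f t ∂θ + TV θ x := by
  have hnorm : ∀ t, ‖f t‖ ≤ 1 := fun t => by
    rw [Real.norm_eq_abs, abs_of_nonneg (hf0 t)]; exact hf1 t
  have hgm : Measurable fun t => f (x + t) := hf.comp (measurable_const_add x)
  have int_g : Integrable (fun t => f (x + t)) θ :=
    integrable_of_bounded_one θ hgm.aestronglyMeasurable fun t => hnorm _
  have int_f : Integrable f θ :=
    integrable_of_bounded_one θ hf.aestronglyMeasurable hnorm
  set φf : ℝ → ℝ := fun lam => (θ {a | lam < f a}).toReal with hφf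
  set φg : ℝ → ℝ := fun lam => (θ {a | lam < f (x + a)}).toReal with hφg
  have eqg : ∫ t, f (x + t) ∂θ = ∫ lam in Ioi (0:ℝ), φg lam :=
    int_g.integral_eq_integral_meas_lt (ae_of_all _ fun t => hf0 _)
  have eqf : ∫ t, f t ∂θ = ∫ lam in Ioi (0:ℝ), φf lam :=
    int_f.integral_eq_integral_meas_lt (ae_of_all _ fun t => hf0 _)
  have hanti : ∀ g : ℝ → ℝ, Antitone (fun lam => (θ {a | lam < g a}).toReal) :=
    fun g a b hab => ENNReal.toReal_mono (measure_ne_top _ _)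
      (measure_mono fun t ht => lt_of_le_of_lt hab ht)
  have hzero : ∀ (g : ℝ → ℝ), (∀ t, g t ≤ 1) → ∀ lam : ℝ, 1 < lam →
      (θ {a | lam < g a}).toReal = 0 := by
    intro g hg lam hlam
    have : {a : ℝ | lam < g a} = ∅ := by
      ext a; simp only [mem_setOf_eq, mem_empty_iff_false, iff_false, not_lt]
      exact le_trans (hg a) hlam.le
    rw [this, measure_empty]; simp
  have hle1 : ∀ (g : ℝ → ℝ) (lam : ℝ), (θ {a | lam < g a}).toReal ≤ 1 := by
    intro g lam
    exact le_trans (ENNReal.toReal_mono ENNReal.one_ne_top prob_le_one) (by simp)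
  have ind_int : ∀ c : ℝ, Integrable ((Ioc (0:ℝ) 1).indicator fun _ => c)
      (volume.restrict (Ioi (0:ℝ))) := by
    intro c
    rw [integrable_indicator_iff measurableSet_Ioc]
    refine (integrableOn_const_iff).mpr (Or.inr ?_)
    calc (volume.restrict (Ioi (0:ℝ))) (Ioc 0 1) ≤ volume (Ioc (0:ℝ) 1) :=
          Measure.restrict_apply_le _ _
      _ < ⊤ := by simp [Real.volume_Ioc]
  have key_int : ∀ g : ℝ → ℝ, (∀ t, g t ≤ 1) →
      Integrable (fun lam => (θ {a | lam < g a}).toReal) (volume.restrict (Ioi (0:ℝ))) := by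
    intro g hg
    refine Integrable.mono' (g := (Ioc (0:ℝ) 1).indicator fun _ => (1:ℝ)) ?_ ?_ ?_
    · exact ind_int 1
    · exact ((hanti g).measurable).aestronglyMeasurable
    filter_upwards [ae_restrict_mem measurableSet_Ioi] with lam hlam
    rw [Real.norm_eq_abs, abs_of_nonneg ENNReal.toReal_nonneg]
    by_cases hl : lam ≤ 1
    · rw [indicator_of_mem (s := Ioc (0:ℝ) 1) ⟨hlam, hl⟩]; exact hle1 g lam
    · rw [indicator_of_notMem (fun hc => hl hc.2), hzero g hg lam (lt_of_not_ge hl)]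
  have int_φf : Integrable φf (volume.restrict (Ioi (0:ℝ))) := key_int f hf1
  have int_φg : Integrable φg (volume.restrict (Ioi (0:ℝ))) := key_int _ (fun t => hf1 _)
  set ψ : ℝ → ℝ := fun lam => φf lam + (Ioc (0:ℝ) 1).indicator (fun _ => TV θ x) lam with hψ
  have int_ψ : Integrable ψ (volume.restrict (Ioi (0:ℝ))) :=
    int_φf.add (ind_int _)
  have hpt : ∀ᵐ lam ∂(volume.restrict (Ioi (0:ℝ))), φg lam ≤ ψ lam := by
    filter_upwards [ae_restrict_mem measurableSet_Ioi] with lam hlam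
    by_cases hl : lam ≤ 1
    · rw [hψ]; simp only []
      rw [indicator_of_mem (s := Ioc (0:ℝ) 1) ⟨hlam, hl⟩]
      exact meas_shift_le θ hθ hf lam
    · have h0 : φg lam = 0 := hzero _ (fun t => hf1 _) lam (lt_of_not_ge hl)
      rw [h0, hψ]; simp only []
      rw [indicator_of_notMem (fun hc => hl hc.2), add_zero]
      exact ENNReal.toReal_nonneg
  have hint : ∫ lam in Ioi (0:ℝ), φg lam ≤ ∫ lam in Ioi (0:ℝ), ψ lam :=
    integral_mono_ae int_φg int_ψ hpt
  have hψval : ∫ lam in Ioi (0:ℝ), ψ lam = (∫ lam in Ioi (0:ℝ), φf lam) + TV θ x := by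
    rw [integral_add int_φf (ind_int _)]
    congr 1
    rw [setIntegral_indicator measurableSet_Ioc,
      inter_eq_self_of_subset_right Ioc_subset_Ioi_self, setIntegral_const]
    simp [Real.volume_Ioc]
  rw [eqg, eqf]
  calc ∫ lam in Ioi (0:ℝ), φg lam ≤ ∫ lam in Ioi (0:ℝ), ψ lam := hint
    _ = (∫ lam in Ioi (0:ℝ), φf lam) + TV θ x := hψval

theorem key_lower_bound {U : Type*} [Nonempty U]
    (h : U → ℝ → ℝ) (hmeas : ∀ u, Measurable (h u))
    (h0 : ∀ u s, 0 ≤ h u s) (h1 : ∀ u s, h u s ≤ 1)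
    (hshift : ∀ (u : U) (T : ℝ), 0 ≤ T → ∃ u' : U, ∀ s ≥ (0:ℝ), h u' s = h u (s + T))
    (V : Measure ℝ → ℝ) (hV : ∀ ν, V ν = ⨅ u, ∫ s, h u s ∂ν)
    (θ : ℕ → Measure ℝ) (hprob : ∀ k, IsProbabilityMeasure (θ k))
    (hsupp : ∀ k, θ k (Iio 0) = 0) (hltc : LTC θ)
    (μ : Measure ℝ) [IsProbabilityMeasure μ] (hμsupp : μ (Iio 0) = 0) :
    ⨅ t : Ici (0:ℝ), V (Measure.map (fun x => x + (t:ℝ)) μ) ≤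
      Filter.liminf (fun k => V (θ k)) atTop := by
  set L := Filter.liminf (fun k => V (θ k)) atTop with hLdef
  refine le_of_forall_pos_le_add fun ε hε => ?_
  set δ := ε / 3 with hδdef
  have hδ : 0 < δ := by positivity
  -- choose S with small tail
  obtain ⟨S, hS0, hStail⟩ : ∃ S : ℝ, 0 < S ∧ (μ (Ioi S)).toReal ≤ δ := by
    have htend : Tendsto (fun S : ℝ => (μ (Iic S)).toReal) atTop (nhds 1) := by
      have ht := tendsto_measure_Iic_atTop (μ := μ)
      rw [measure_univ] at ht
      have := (ENNReal.tendsto_toReal (a := 1) ENNReal.one_ne_top).comp ht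
      simpa [Function.comp_def] using this
    have hev : ∀ᶠ S : ℝ in atTop, 1 - δ < (μ (Iic S)).toReal :=
      htend.eventually (eventually_gt_nhds (by linarith))
    obtain ⟨S, hS1, hS2⟩ := ((eventually_gt_atTop (0:ℝ)).and hev).exists
    refine ⟨S, hS1, ?_⟩
    have hadd : (μ (Iic S)).toReal + (μ (Ioi S)).toReal = 1 := by
      rw [← ENNReal.toReal_add (measure_ne_top _ _) (measure_ne_top _ _)]
      have : μ (Iic S) + μ (Ioi S) = 1 := by
        rw [← measure_univ (μ := μ), ← Iic_union_Ioi (a := S)]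
        exact (measure_union (Iic_disjoint_Ioi le_rfl) measurableSet_Ioi).symm
      rw [this]; simp
    linarith
  -- frequently V θ k close to liminf, eventually TV small
  have hbdd : IsBoundedUnder (· ≥ ·) atTop (fun k => V (θ k)) := by
    refine isBoundedUnder_of ⟨0, fun k => ?_⟩
    rw [hV]
    exact le_ciInf fun u => integral_nonneg (fun s => h0 u s)
  have hbdd' : IsBoundedUnder (· ≤ ·) atTop (fun k => V (θ k)) := by
    refine isBoundedUnder_of ⟨1, fun k => ?_⟩
    haveI := hprob k
    rw [hV]
    refine ciInf_le_of_le ⟨0, by rintro y ⟨u', rfl⟩; exact integral_nonneg (h0 u')⟩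
      (Classical.arbitrary U) ?_
    calc ∫ s, h (Classical.arbitrary U) s ∂(θ k) ≤ ∫ _, (1:ℝ) ∂(θ k) := by
          refine integral_mono ?_ (integrable_const _) fun s => h1 _ s
          exact integrable_of_bounded_one _ (hmeas _).aestronglyMeasurable fun a => by
            rw [Real.norm_eq_abs, abs_of_nonneg (h0 _ _)]; exact h1 _ _
      _ = 1 := by simp
  have h1f : ∃ᶠ k in atTop, V (θ k) < L + δ :=
    frequently_lt_of_liminf_lt hbdd'.isCoboundedUnder_ge (by rw [← hLdef]; linarith)
  have h2f : ∀ᶠ k in atTop, (⨆ s : Icc (0:ℝ) S, TV (θ k) s) < δ :=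
    (hltc S hS0).eventually (eventually_lt_nhds hδ) |>.mono (fun k hk => hk)
  obtain ⟨k, hk1, hk2⟩ := (h1f.and_eventually h2f).exists
  haveI := hprob k
  -- TV bound for x ∈ [0,S]
  have hTVle : ∀ x ∈ Icc (0:ℝ) S, TV (θ k) x ≤ δ := by
    intro x hx
    have hb : BddAbove (range fun s : Icc (0:ℝ) S => TV (θ k) s) :=
      ⟨1, by rintro y ⟨s, rfl⟩; exact TV_le_one _ _⟩
    exact le_of_lt (lt_of_le_of_lt (le_ciSup hb ⟨x, hx⟩) hk2)
  -- choose u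
  obtain ⟨u, hu⟩ : ∃ u, ∫ s, h u s ∂(θ k) < L + δ := by
    apply exists_lt_of_ciInf_lt
    rw [← hV]; exact hk1
  -- Fubini setup
  have hFm : Measurable fun p : ℝ × ℝ => h u (p.2 + p.1) :=
    (hmeas u).comp (measurable_snd.add measurable_fst)
  have hFint : Integrable (fun p : ℝ × ℝ => h u (p.2 + p.1)) ((θ k).prod μ) :=
    integrable_of_bounded_one _ hFm.aestronglyMeasurable fun p => by
      rw [Real.norm_eq_abs, abs_of_nonneg (h0 u _)]; exact h1 u _
  set G : ℝ → ℝ := fun t => ∫ x, h u (x + t) ∂μ with hGdef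
  set I : ℝ → ℝ := fun x => ∫ t, h u (x + t) ∂(θ k) with hIdef
  have hGint : Integrable G (θ k) := hFint.integral_prod_left
  have hIint : Integrable I μ := hFint.integral_prod_right
  have hswap : ∫ t, G t ∂(θ k) = ∫ x, I x ∂μ :=
    integral_integral_swap (f := fun t x => h u (x + t)) hFint
  -- a.e. nonneg of points
  have haeθ : ∀ᵐ t ∂(θ k), (0:ℝ) ≤ t := by
    rw [ae_iff]
    simpa [Iio, not_le] using hsupp k
  have haeμ : ∀ᵐ x ∂μ, (0:ℝ) ≤ x := by
    rw [ae_iff]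
    simpa [Iio, not_le] using hμsupp
  -- Step 1: LHS ≤ ∫ G dθk
  have step1 : (⨅ t : Ici (0:ℝ), V (Measure.map (fun x => x + (t:ℝ)) μ)) ≤ ∫ t, G t ∂(θ k) := by
    have hbb : BddBelow (range fun t : Ici (0:ℝ) => V (Measure.map (fun x => x + (t:ℝ)) μ)) := by
      refine ⟨0, ?_⟩
      rintro y ⟨t, rfl⟩
      dsimp only
      rw [hV]
      exact le_ciInf fun u' => integral_nonneg (fun s => h0 u' s)
    have hae : ∀ᵐ t ∂(θ k),
        (⨅ t : Ici (0:ℝ), V (Measure.map (fun x => x + (t:ℝ)) μ)) ≤ G t := by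
      filter_upwards [haeθ] with t ht
      calc (⨅ t : Ici (0:ℝ), V (Measure.map (fun x => x + (t:ℝ)) μ))
          ≤ V (Measure.map (fun x => x + t) μ) := ciInf_le hbb ⟨t, ht⟩
        _ ≤ G t := by
            rw [hV]
            have hle : (⨅ u', ∫ s, h u' s ∂(Measure.map (fun x => x + t) μ)) ≤
                ∫ s, h u s ∂(Measure.map (fun x => x + t) μ) := by
              refine ciInf_le ⟨0, ?_⟩ u
              rintro y ⟨u', rfl⟩
              exact integral_nonneg (fun s => h0 u' s)
            refine hle.trans_eq ?_
            rw [integral_map (measurable_add_const t).aemeasurable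
              (hmeas u).aestronglyMeasurable]
    calc (⨅ t : Ici (0:ℝ), V (Measure.map (fun x => x + (t:ℝ)) μ))
        = ∫ _, (⨅ t : Ici (0:ℝ), V (Measure.map (fun x => x + (t:ℝ)) μ)) ∂(θ k) := by
          simp
      _ ≤ ∫ t, G t ∂(θ k) := integral_mono_ae (integrable_const _) hGint hae
  -- Step 2: bound ∫ I dμ
  set D : ℝ := (∫ t, h u t ∂(θ k)) + δ with hDdef
  have hD0 : 0 ≤ D := by
    have := integral_nonneg (f := h u) (fun t => h0 u t) (μ := θ k)
    linarith
  have step2 : ∫ x, I x ∂μ ≤ D + δ := by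
    have hBint : Integrable (fun x : ℝ => D + (Ioi S).indicator (fun _ => (1:ℝ)) x) μ :=
      (integrable_const _).add ((integrable_const 1).indicator measurableSet_Ioi)
    have hIB : ∀ᵐ x ∂μ, I x ≤ D + (Ioi S).indicator (fun _ => (1:ℝ)) x := by
      filter_upwards [haeμ] with x hx
      by_cases hxS : x ≤ S
      · have hshift : I x ≤ (∫ t, h u t ∂(θ k)) + TV (θ k) x :=
          integral_shift_le (θ k) (hsupp k) (hmeas u) (h0 u) (h1 u)
        have hTV : TV (θ k) x ≤ δ := hTVle x ⟨hx, hxS⟩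
        have hind : (0:ℝ) ≤ (Ioi S).indicator (fun _ => (1:ℝ)) x :=
          Set.indicator_nonneg (fun _ _ => zero_le_one) x
        calc I x ≤ (∫ t, h u t ∂(θ k)) + TV (θ k) x := hshift
          _ ≤ D := by rw [hDdef]; linarith
          _ ≤ D + (Ioi S).indicator (fun _ => (1:ℝ)) x := by linarith
      · have hI1 : I x ≤ 1 := by
          have hint : Integrable (fun t => h u (x + t)) (θ k) :=
            integrable_of_bounded_one _
              ((hmeas u).comp (measurable_const_add x)).aestronglyMeasurable fun t => by
                rw [Real.norm_eq_abs, abs_of_nonneg (h0 u _)]; exact h1 u _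
          calc I x ≤ ∫ _, (1:ℝ) ∂(θ k) :=
                integral_mono hint (integrable_const _) fun t => h1 u _
            _ = 1 := by simp
        have hind : (Ioi S).indicator (fun _ => (1:ℝ)) x = 1 :=
          indicator_of_mem (s := Ioi S) (lt_of_not_ge hxS) _
        rw [hind]; linarith
    calc ∫ x, I x ∂μ ≤ ∫ x, (D + (Ioi S).indicator (fun _ => (1:ℝ)) x) ∂μ :=
          integral_mono_ae hIint hBint hIB
      _ = D + (μ (Ioi S)).toReal := by
          rw [integral_add (integrable_const _)
            ((integrable_const 1).indicator measurableSet_Ioi)]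
          rw [integral_indicator_const (1:ℝ) measurableSet_Ioi]
          simp
          rfl
      _ ≤ D + δ := by linarith
  calc (⨅ t : Ici (0:ℝ), V (Measure.map (fun x => x + (t:ℝ)) μ))
      ≤ ∫ t, G t ∂(θ k) := step1
    _ = ∫ x, I x ∂μ := hswap
    _ ≤ D + δ := step2
    _ ≤ L + ε := by rw [hDdef]; rw [hδdef] at hu ⊢; linarith
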